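/- Fix n ≥ 3, set γ := 2 − 2/n, let α ∈ (0, γ − 1), and let h(t) := (1 − t²)^{−α} for |t| < 1. Let X := ℝ^{n−1} × (−1, 1) ⊆ ℝⁿ, u(x', x_n) := |x'|^γ h(x_n), and define the Legendre transform v : ℝⁿ → ℝ by v(y) := sup_{x ∈ X} ( ⟨x, y⟩ − u(x) ). Then: (a) v is finite at every y ∈ ℝⁿ and v is convex on ℝⁿ; (b) v is differentiable at every y ≠ 0; (c) the subdifferential of v at the origin is ∂v(0) = {0} × [−1, 1]; (d) for every s > 0, ∇v(0, ±s) = (0, ±1). -/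

import Mathlib

open MeasureTheory Set
open scoped InnerProductSpace ENNReal

/-- `h(t) = (1 − t²)^{−α}`. -/
noncomputable def hPog (α t : ℝ) : ℝ := (1 - t ^ 2) ^ (-α)

/-- The last coordinate `x_n` of `x ∈ ℝⁿ`. -/
def lastCoord (n : ℕ) (hn : 3 ≤ n) (x : EuclideanSpace ℝ (Fin n)) : ℝ :=
  x ⟨n - 1, by omega⟩

/-- The Euclidean norm `|x'|` of the first `n − 1` coordinates of `x ∈ ℝⁿ`. -/
noncomputable def primeNorm (n : ℕ) (x : EuclideanSpace ℝ (Fin n)) : ℝ :=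
  Real.sqrt (∑ i : Fin n, if (i : ℕ) = n - 1 then 0 else x i ^ 2)

/-- The Pogorelov-type function `u(x', x_n) = |x'|^γ h(x_n)` with `γ = 2 − 2/n`. -/
noncomputable def uPog (n : ℕ) (hn : 3 ≤ n) (α : ℝ) (x : EuclideanSpace ℝ (Fin n)) : ℝ :=
  primeNorm n x ^ (2 - 2 / (n : ℝ)) * hPog α (lastCoord n hn x)

/-- The slab `X = ℝ^{n−1} × (−1, 1)`. -/
def XPog (n : ℕ) (hn : 3 ≤ n) : Set (EuclideanSpace ℝ (Fin n)) :=
  {x | lastCoord n hn x ∈ Set.Ioo (-1 : ℝ) 1}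

/-- The Legendre transform `v(y) = sup_{x ∈ X} (⟨x, y⟩ − u(x))`. -/
noncomputable def vPog (n : ℕ) (hn : 3 ≤ n) (α : ℝ) (y : EuclideanSpace ℝ (Fin n)) : ℝ :=
  sSup ((fun x => ⟪x, y⟫_ℝ - uPog n hn α x) '' XPog n hn)

/-- The subdifferential of `v` at `y`:
`∂v(y) = {q : ∀ z, v(z) ≥ v(y) + ⟨q, z − y⟩}`. -/
def subdifferential {n : ℕ} (v : EuclideanSpace ℝ (Fin n) → ℝ)
    (y : EuclideanSpace ℝ (Fin n)) : Set (EuclideanSpace ℝ (Fin n)) :=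
  {q | ∀ z, v y + ⟪q, z - y⟫_ℝ ≤ v z}

namespace PogAux
open scoped NNReal

variable (n : ℕ)

noncomputable def gg : ℝ := 2 - 2 / (n : ℝ)
noncomputable def bb : ℝ := 1 / (gg n - 1)
noncomputable def gg' : ℝ := gg n * bb n
noncomputable def cc : ℝ := gg n ^ (-(bb n)) / gg' n

variable {n}

lemma one_lt_gg (hn : 3 ≤ n) : 1 < gg n := by
  have h3 : (3 : ℝ) ≤ (n : ℝ) := by exact_mod_cast hn
  have hn0 : (0 : ℝ) < n := by linarith
  have : 2 / (n : ℝ) ≤ 2 / 3 := by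
    apply div_le_div_of_nonneg_left <;> linarith
  unfold gg; linarith

lemma bb_pos (hn : 3 ≤ n) : 0 < bb n := by
  have := one_lt_gg hn; unfold bb
  apply div_pos one_pos; linarith

lemma gg_pos (hn : 3 ≤ n) : 0 < gg n := lt_trans one_pos (one_lt_gg hn)

lemma one_lt_gg' (hn : 3 ≤ n) : 1 < gg' n := by
  have h1 := one_lt_gg hn
  have : 1 < gg n / (gg n - 1) := by
    rw [lt_div_iff₀ (by linarith)]; linarith
  unfold gg' bb
  rw [mul_one_div]; exact this

lemma gg'_pos (hn : 3 ≤ n) : 0 < gg' n := lt_trans one_pos (one_lt_gg' hn)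

lemma gg'_eq_div (hn : 3 ≤ n) : gg' n = gg n / (gg n - 1) := by
  unfold gg' bb; rw [mul_one_div]

lemma gg'_sub_one (hn : 3 ≤ n) : gg' n - 1 = bb n := by
  have h1 := one_lt_gg hn
  rw [gg'_eq_div hn]; unfold bb
  have h2 : gg n - 1 ≠ 0 := by linarith
  field_simp
  ring

lemma conjExp (hn : 3 ≤ n) : (gg n).HolderConjugate (gg' n) := by
  have h1 := one_lt_gg hn
  rw [Real.holderConjugate_iff]
  constructor
  · exact h1
  · rw [gg'_eq_div hn]
    field_simp
    ring

lemma cc_pos (hn : 3 ≤ n) : 0 < cc n := by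
  have h1 := gg_pos hn; have h2 := gg'_pos hn
  unfold cc
  exact div_pos (Real.rpow_pos_of_pos h1 _) h2

/-- Exact Young-type inequality with weight. -/
lemma E1 (hn : 3 ≤ n) {r a H : ℝ} (hr : 0 ≤ r) (ha : 0 ≤ a) (hH : 0 < H) :
    r * a ≤ H * r ^ gg n + cc n * a ^ gg' n * H ^ (-(bb n)) := by
  have hγ := gg_pos hn
  have hγ' := gg'_pos hn
  have hβ := bb_pos hn
  set w : ℝ := (gg n * H) ^ (1 / gg n) with hw
  have hwpos : 0 < w := Real.rpow_pos_of_pos (by positivity) _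
  have hyoung := Real.young_inequality_of_nonneg (mul_nonneg hr hwpos.le)
    (div_nonneg ha hwpos.le) (conjExp hn)
  have hwγ : w ^ gg n = gg n * H := by
    rw [hw, ← Real.rpow_mul (by positivity), one_div_mul_cancel (ne_of_gt hγ), Real.rpow_one]
  have hwγ' : w ^ gg' n = gg n ^ bb n * H ^ bb n := by
    rw [hw, ← Real.rpow_mul (by positivity)]
    have h : 1 / gg n * gg' n = bb n := by
      unfold gg'; field_simp
    rw [h, Real.mul_rpow hγ.le hH.le]
  have h1 : r * w * (a / w) = r * a := by field_simp
  have h2 : (r * w) ^ gg n / gg n = H * r ^ gg n := by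
    rw [Real.mul_rpow hr hwpos.le, hwγ]; field_simp
  have h3 : (a / w) ^ gg' n / gg' n = cc n * a ^ gg' n * H ^ (-(bb n)) := by
    rw [Real.div_rpow ha hwpos.le, hwγ', Real.rpow_neg hH.le]
    unfold cc
    rw [Real.rpow_neg hγ.le]
    have hγβ : (0:ℝ) < gg n ^ bb n := Real.rpow_pos_of_pos hγ _
    have hHβ : (0:ℝ) < H ^ bb n := Real.rpow_pos_of_pos hH _
    rw [div_eq_mul_inv, div_eq_mul_inv, mul_inv]
    ring
  rw [h1, h2, h3] at hyoung
  exact hyoung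

/-- Exact attainment identity for the one-dimensional Legendre transform. -/
lemma E2 (hn : 3 ≤ n) {a H : ℝ} (ha : 0 ≤ a) (hH : 0 < H) :
    (a / (gg n * H)) ^ bb n * a
      = H * ((a / (gg n * H)) ^ bb n) ^ gg n + cc n * a ^ gg' n * H ^ (-(bb n)) := by
  have hγ := gg_pos hn
  have hβ := bb_pos hn
  have hγ' := gg'_pos hn
  rcases eq_or_lt_of_le ha with h0 | ha'
  · rw [← h0]
    rw [zero_div, Real.zero_rpow (ne_of_gt hβ), Real.zero_rpow (ne_of_gt hγ'),
      Real.zero_rpow (ne_of_gt hγ)]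
    ring
  · have hγH : (0:ℝ) < gg n * H := by positivity
    have hr : (a / (gg n * H)) ^ bb n = a ^ bb n * (gg n) ^ (-(bb n)) * H ^ (-(bb n)) := by
      rw [Real.div_rpow ha'.le hγH.le, Real.mul_rpow hγ.le hH.le,
        Real.rpow_neg hγ.le, Real.rpow_neg hH.le, div_eq_mul_inv, mul_inv]
      ring
    have hrγ : ((a / (gg n * H)) ^ bb n) ^ gg n
        = a ^ gg' n * (gg n) ^ (-(gg' n)) * H ^ (-(gg' n)) := by
      rw [← Real.rpow_mul (le_of_lt (div_pos ha' hγH))]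
      have h : bb n * gg n = gg' n := by unfold gg'; ring
      rw [h, Real.div_rpow ha'.le hγH.le, Real.mul_rpow hγ.le hH.le,
        Real.rpow_neg hγ.le, Real.rpow_neg hH.le, div_eq_mul_inv, mul_inv]
      ring
    rw [hrγ, hr]
    have hb1 : a ^ bb n * a = a ^ gg' n := by
      rw [← gg'_sub_one hn, ← Real.rpow_add_one (ne_of_gt ha')]
      ring_nf
    have hgn : gg n ^ (-(gg' n)) = gg n ^ (-(bb n)) * (gg n)⁻¹ := by
      rw [← Real.rpow_neg_one (gg n), ← Real.rpow_add hγ]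
      congr 1
      have := gg'_sub_one hn; linarith
    have hHn : H ^ (-(gg' n)) = H ^ (-(bb n)) * H⁻¹ := by
      rw [← Real.rpow_neg_one H, ← Real.rpow_add hH]
      congr 1
      have := gg'_sub_one hn; linarith
    have hsum := (conjExp hn).inv_add_inv_eq_one
    unfold cc
    calc a ^ bb n * gg n ^ (-(bb n)) * H ^ (-(bb n)) * a
        = (a ^ bb n * a) * gg n ^ (-(bb n)) * H ^ (-(bb n)) := by ring
      _ = a ^ gg' n * gg n ^ (-(bb n)) * H ^ (-(bb n)) * ((gg n)⁻¹ + (gg' n)⁻¹) := by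
          rw [hb1, hsum]; ring
      _ = H * (a ^ gg' n * (gg n ^ (-(bb n)) * (gg n)⁻¹) * (H ^ (-(bb n)) * H⁻¹))
          + gg n ^ (-(bb n)) / gg' n * a ^ gg' n * H ^ (-(bb n)) := by
          field_simp
      _ = H * (a ^ gg' n * gg n ^ (-(gg' n)) * H ^ (-(gg' n)))
          + gg n ^ (-(bb n)) / gg' n * a ^ gg' n * H ^ (-(bb n)) := by rw [← hgn, ← hHn]

variable (n) in
/-- Orthogonal projection onto the first `n-1` coordinates, as a continuous linear map. -/
noncomputable def Pj : EuclideanSpace ℝ (Fin n) →L[ℝ] EuclideanSpace ℝ (Fin n) :=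
  LinearMap.toContinuousLinearMap
    { toFun := fun x => WithLp.toLp 2 (fun i : Fin n => if (i : ℕ) = n - 1 then 0 else x i)
      map_add' := by
        intro x y; ext i; by_cases h : (i : ℕ) = n - 1 <;> simp [h, PiLp.add_apply]
      map_smul' := by
        intro c x; ext i; by_cases h : (i : ℕ) = n - 1 <;> simp [h, PiLp.smul_apply] }

lemma Pj_apply (x : EuclideanSpace ℝ (Fin n)) (i : Fin n) :
    Pj n x i = if (i : ℕ) = n - 1 then 0 else x i := rfl

def li (hn : 3 ≤ n) : Fin n := ⟨n - 1, by omega⟩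

lemma lastCoord_eq (hn : 3 ≤ n) (x : EuclideanSpace ℝ (Fin n)) :
    lastCoord n hn x = x (li hn) := rfl

lemma li_val (hn : 3 ≤ n) : ((li hn : Fin n) : ℕ) = n - 1 := rfl

lemma eq_li_iff (hn : 3 ≤ n) (i : Fin n) : (i : ℕ) = n - 1 ↔ i = li hn := by
  rw [Fin.ext_iff, li_val]

lemma pn_eq (hn : 3 ≤ n) (x : EuclideanSpace ℝ (Fin n)) : primeNorm n x = ‖Pj n x‖ := by
  rw [EuclideanSpace.norm_eq, primeNorm]
  congr 1
  apply Finset.sum_congr rfl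
  intro i _
  by_cases h : (i : ℕ) = n - 1 <;> simp [Pj_apply, h, Real.norm_eq_abs, sq_abs]

lemma Pj_last (hn : 3 ≤ n) (x : EuclideanSpace ℝ (Fin n)) : Pj n x (li hn) = 0 := by
  rw [Pj_apply, if_pos (li_val hn)]

lemma Pj_idem (x : EuclideanSpace ℝ (Fin n)) : Pj n (Pj n x) = Pj n x := by
  ext i; by_cases h : (i : ℕ) = n - 1 <;> simp [Pj_apply, h]

lemma Pj_single_last (hn : 3 ≤ n) (t : ℝ) :
    Pj n (EuclideanSpace.single (li hn) t) = 0 := by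
  ext i
  by_cases h : (i : ℕ) = n - 1
  · simp [Pj_apply, h]
  · have : i ≠ li hn := fun hc => h (by rw [hc]; exact li_val hn)
    simp [Pj_apply, h, EuclideanSpace.single_apply, this]

lemma inner_split (hn : 3 ≤ n) (x z : EuclideanSpace ℝ (Fin n)) :
    ⟪x, z⟫_ℝ = ⟪Pj n x, Pj n z⟫_ℝ + x (li hn) * z (li hn) := by
  simp only [PiLp.inner_apply, RCLike.inner_apply, starRingEnd_apply, star_trivial]
  have : ∀ i : Fin n, Pj n z i * Pj n x i = z i * x i - (if i = li hn then z i * x i else 0) := by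
    intro i
    by_cases h : (i : ℕ) = n - 1
    · rw [if_pos ((eq_li_iff hn i).1 h)]; simp [Pj_apply, h]
    · rw [if_neg (fun hc => h ((eq_li_iff hn i).2 hc))]; simp [Pj_apply, h]
  rw [Finset.sum_congr rfl (fun i _ => this i), Finset.sum_sub_distrib,
    Finset.sum_ite_eq' Finset.univ (li hn)]
  simp
  ring

lemma norm_Pj_le (x : EuclideanSpace ℝ (Fin n)) : ‖Pj n x‖ ≤ ‖x‖ := by
  rw [EuclideanSpace.norm_eq, EuclideanSpace.norm_eq]
  apply Real.sqrt_le_sqrt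
  apply Finset.sum_le_sum
  intro i _
  by_cases h : (i : ℕ) = n - 1 <;> simp [Pj_apply, h] <;> positivity

lemma inner_Pj_left (hn : 3 ≤ n) (x z : EuclideanSpace ℝ (Fin n)) :
    ⟪Pj n x, z⟫_ℝ = ⟪Pj n x, Pj n z⟫_ℝ := by
  have h := inner_split hn (Pj n x) z
  rw [Pj_idem, Pj_last hn] at h
  simpa using h

variable (n) in
noncomputable def mm (α : ℝ) : ℝ := α * bb n

variable (n) in
noncomputable def ff (α t : ℝ) : ℝ := (1 - t ^ 2) ^ mm n α

variable (n) in
noncomputable def Phi (α : ℝ) (hn : 3 ≤ n) (z : EuclideanSpace ℝ (Fin n)) (t : ℝ) : ℝ :=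
  t * z (li hn) + cc n * ‖Pj n z‖ ^ gg' n * ff n α t

variable {α : ℝ}

lemma mm_pos (hn : 3 ≤ n) (hα0 : 0 < α) : 0 < mm n α := mul_pos hα0 (bb_pos hn)

lemma mm_lt_one (hn : 3 ≤ n) (hα1 : α < (2 - 2 / (n : ℝ)) - 1) : mm n α < 1 := by
  have hβ := bb_pos hn
  have hγ := one_lt_gg hn
  have h1 : α < gg n - 1 := hα1
  have : mm n α < (gg n - 1) * bb n := by
    unfold mm; apply mul_lt_mul_of_pos_right h1 hβ
  have h2 : (gg n - 1) * bb n = 1 := by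
    unfold bb; rw [mul_one_div, div_self (by linarith : gg n - 1 ≠ 0)]
  linarith

lemma one_sub_sq_nonneg {t : ℝ} (ht : t ∈ Icc (-1:ℝ) 1) : 0 ≤ 1 - t ^ 2 := by
  rcases ht with ⟨h1, h2⟩; nlinarith

lemma one_sub_sq_pos {t : ℝ} (ht : t ∈ Ioo (-1:ℝ) 1) : 0 < 1 - t ^ 2 := by
  rcases ht with ⟨h1, h2⟩; nlinarith

lemma ff_nonneg (hα0 : 0 < α) {t : ℝ} (ht : t ∈ Icc (-1:ℝ) 1) : 0 ≤ ff n α t :=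
  Real.rpow_nonneg (one_sub_sq_nonneg ht) _

lemma ff_le_one (hn : 3 ≤ n) (hα0 : 0 < α) {t : ℝ} (ht : t ∈ Icc (-1:ℝ) 1) : ff n α t ≤ 1 :=
  Real.rpow_le_one (one_sub_sq_nonneg ht) (by nlinarith [ht.1, ht.2]) (mm_pos hn hα0).le

lemma ff_cont (hn : 3 ≤ n) (hα0 : 0 < α) : Continuous (ff n α) := by
  apply continuous_iff_continuousAt.2
  intro t
  exact (Real.continuousAt_rpow_const _ _ (Or.inr (mm_pos hn hα0).le)).comp
    (by fun_prop)

lemma ff_one (hn : 3 ≤ n) (hα0 : 0 < α) : ff n α 1 = 0 := by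
  unfold ff; norm_num
  exact Real.zero_rpow (ne_of_gt (mm_pos hn hα0))

lemma ff_neg_one (hn : 3 ≤ n) (hα0 : 0 < α) : ff n α (-1) = 0 := by
  unfold ff; norm_num
  exact Real.zero_rpow (ne_of_gt (mm_pos hn hα0))

lemma H_pow_bb (hn : 3 ≤ n) {t : ℝ} (ht : t ∈ Ioo (-1:ℝ) 1) :
    ((1 - t ^ 2) ^ (-α)) ^ (-(bb n)) = ff n α t := by
  rw [← Real.rpow_mul (one_sub_sq_pos ht).le, neg_mul_neg]
  rfl

lemma u_eq (hn : 3 ≤ n) (x : EuclideanSpace ℝ (Fin n)) :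
    uPog n hn α x = ‖Pj n x‖ ^ gg n * (1 - (x (li hn)) ^ 2) ^ (-α) := by
  rw [uPog, pn_eq hn, hPog, lastCoord_eq]
  rfl

lemma mem_X_iff (hn : 3 ≤ n) (x : EuclideanSpace ℝ (Fin n)) :
    x ∈ XPog n hn ↔ x (li hn) ∈ Ioo (-1:ℝ) 1 := Iff.rfl

/-- Key elementwise upper bound. -/
lemma elem_le (hn : 3 ≤ n) (z : EuclideanSpace ℝ (Fin n)) {x : EuclideanSpace ℝ (Fin n)}
    (hx : x ∈ XPog n hn) :
    ⟪x, z⟫_ℝ - uPog n hn α x ≤ Phi n α hn z (x (li hn)) := by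
  have ht : x (li hn) ∈ Ioo (-1:ℝ) 1 := (mem_X_iff hn x).1 hx
  have hH : (0:ℝ) < (1 - (x (li hn)) ^ 2) ^ (-α) :=
    Real.rpow_pos_of_pos (one_sub_sq_pos ht) _
  have hCS : ⟪Pj n x, Pj n z⟫_ℝ ≤ ‖Pj n x‖ * ‖Pj n z‖ := real_inner_le_norm _ _
  have hE1 := E1 hn (norm_nonneg (Pj n x)) (norm_nonneg (Pj n z)) hH
  rw [inner_split hn x z, u_eq hn x]
  have hff := H_pow_bb (α := α) hn ht
  unfold Phi
  rw [← hff]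
  nlinarith [hCS, hE1]

lemma Phi_le_coarse (hn : 3 ≤ n) (hα0 : 0 < α) (z : EuclideanSpace ℝ (Fin n)) {t : ℝ}
    (ht : t ∈ Icc (-1:ℝ) 1) :
    Phi n α hn z t ≤ |z (li hn)| + cc n * ‖Pj n z‖ ^ gg' n := by
  unfold Phi
  have h1 : t * z (li hn) ≤ |z (li hn)| := by
    calc t * z (li hn) ≤ |t * z (li hn)| := le_abs_self _
      _ = |t| * |z (li hn)| := abs_mul _ _
      _ ≤ 1 * |z (li hn)| := by
          apply mul_le_mul_of_nonneg_right _ (abs_nonneg _)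
          rw [abs_le]; exact ⟨ht.1, ht.2⟩
      _ = |z (li hn)| := one_mul _
  have h2 : cc n * ‖Pj n z‖ ^ gg' n * ff n α t ≤ cc n * ‖Pj n z‖ ^ gg' n * 1 := by
    apply mul_le_mul_of_nonneg_left (ff_le_one hn hα0 ht)
    exact mul_nonneg (cc_pos hn).le (Real.rpow_nonneg (norm_nonneg _) _)
  linarith

lemma zero_mem_X (hn : 3 ≤ n) : (0 : EuclideanSpace ℝ (Fin n)) ∈ XPog n hn := by
  rw [mem_X_iff hn]
  have h0 : (0 : EuclideanSpace ℝ (Fin n)) (li hn) = 0 := rfl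
  rw [h0]
  constructor <;> norm_num

lemma nonemptyIm (hn : 3 ≤ n) (z : EuclideanSpace ℝ (Fin n)) :
    ((fun x => ⟪x, z⟫_ℝ - uPog n hn α x) '' XPog n hn).Nonempty :=
  ⟨_, Set.mem_image_of_mem _ (zero_mem_X hn)⟩

lemma bddA (hn : 3 ≤ n) (hα0 : 0 < α) (z : EuclideanSpace ℝ (Fin n)) :
    BddAbove ((fun x => ⟪x, z⟫_ℝ - uPog n hn α x) '' XPog n hn) := by
  refine ⟨|z (li hn)| + cc n * ‖Pj n z‖ ^ gg' n, ?_⟩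
  rintro w ⟨x, hx, rfl⟩
  have ht : x (li hn) ∈ Icc (-1:ℝ) 1 := Ioo_subset_Icc_self ((mem_X_iff hn x).1 hx)
  exact le_trans (elem_le hn z hx) (Phi_le_coarse hn hα0 z ht)

lemma v_le_coarse (hn : 3 ≤ n) (hα0 : 0 < α) (z : EuclideanSpace ℝ (Fin n)) :
    vPog n hn α z ≤ |z (li hn)| + cc n * ‖Pj n z‖ ^ gg' n := by
  apply csSup_le (nonemptyIm hn z)
  rintro w ⟨x, hx, rfl⟩
  have ht : x (li hn) ∈ Icc (-1:ℝ) 1 := Ioo_subset_Icc_self ((mem_X_iff hn x).1 hx)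
  exact le_trans (elem_le hn z hx) (Phi_le_coarse hn hα0 z ht)

/-- Attainment: each interior `t` value of `Phi` is attained, hence below `v`. -/
lemma attain (hn : 3 ≤ n) (hα0 : 0 < α) (z : EuclideanSpace ℝ (Fin n)) {t : ℝ}
    (ht : t ∈ Ioo (-1:ℝ) 1) : Phi n α hn z t ≤ vPog n hn α z := by
  have hγ := gg_pos hn
  have hγ' := gg'_pos hn
  have hH : (0:ℝ) < (1 - t ^ 2) ^ (-α) := Real.rpow_pos_of_pos (one_sub_sq_pos ht) _
  set H : ℝ := (1 - t ^ 2) ^ (-α) with hHdef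
  by_cases hz : ‖Pj n z‖ = 0
  · -- use x = single (li hn) t
    set x : EuclideanSpace ℝ (Fin n) := EuclideanSpace.single (li hn) t with hxdef
    have hxl : x (li hn) = t := by simp [hxdef, EuclideanSpace.single_apply]
    have hxX : x ∈ XPog n hn := by rw [mem_X_iff hn, hxl]; exact ht
    have hux : uPog n hn α x = 0 := by
      rw [u_eq hn, hxdef, Pj_single_last hn]
      simp [Real.zero_rpow (ne_of_gt hγ)]
    have hinner : ⟪x, z⟫_ℝ = t * z (li hn) := by
      rw [hxdef, EuclideanSpace.inner_single_left]
      simp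
    have : Phi n α hn z t = ⟪x, z⟫_ℝ - uPog n hn α x := by
      unfold Phi
      rw [hux, hinner, hz, Real.zero_rpow (ne_of_gt hγ')]
      ring
    rw [this]
    exact le_csSup (bddA hn hα0 z) (Set.mem_image_of_mem _ hxX)
  · have ha : 0 < ‖Pj n z‖ := lt_of_le_of_ne (norm_nonneg _) (Ne.symm hz)
    set a : ℝ := ‖Pj n z‖ with hadef
    set r : ℝ := (a / (gg n * H)) ^ bb n with hrdef
    have hrpos : 0 < r := Real.rpow_pos_of_pos (div_pos ha (by positivity)) _
    set x : EuclideanSpace ℝ (Fin n) :=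
      (r / a) • Pj n z + EuclideanSpace.single (li hn) t with hxdef
    have hxl : x (li hn) = t := by
      rw [hxdef]
      simp [PiLp.add_apply, PiLp.smul_apply, Pj_last hn, EuclideanSpace.single_apply]
    have hxX : x ∈ XPog n hn := by rw [mem_X_iff hn, hxl]; exact ht
    have hPx : Pj n x = (r / a) • Pj n z := by
      rw [hxdef, map_add, _root_.map_smul, Pj_idem, Pj_single_last hn]
      simp
    have hnPx : ‖Pj n x‖ = r := by
      rw [hPx, norm_smul, Real.norm_eq_abs, abs_of_nonneg (by positivity : (0:ℝ) ≤ r / a),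
        ← hadef, div_mul_cancel₀ _ (ne_of_gt ha)]
    have hinner : ⟪x, z⟫_ℝ = r * a + t * z (li hn) := by
      rw [hxdef, inner_add_left, real_inner_smul_left, EuclideanSpace.inner_single_left]
      have h1 : ⟪Pj n z, z⟫_ℝ = a ^ 2 := by
        rw [inner_Pj_left hn, real_inner_self_eq_norm_sq]
      rw [h1]
      simp only [conj_trivial]
      field_simp
    have hux : uPog n hn α x = H * r ^ gg n := by
      rw [u_eq hn, hnPx, hxl, ← hHdef]; ring
    have key : ⟪x, z⟫_ℝ - uPog n hn α x = Phi n α hn z t := by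
      rw [hinner, hux]
      have hE2 := E2 hn ha.le hH
      rw [← hrdef] at hE2
      unfold Phi
      rw [← H_pow_bb hn ht, ← hHdef, ← hadef]
      linarith
    rw [← key]
    exact le_csSup (bddA hn hα0 z) (Set.mem_image_of_mem _ hxX)

lemma v_nonneg (hn : 3 ≤ n) (hα0 : 0 < α) (z : EuclideanSpace ℝ (Fin n)) :
    0 ≤ vPog n hn α z := by
  have h := attain hn hα0 z (t := 0) (by norm_num)
  refine le_trans ?_ h
  unfold Phi ff
  have hcc := cc_pos hn
  norm_num
  positivity

lemma abs_le_v (hn : 3 ≤ n) (hα0 : 0 < α) (z : EuclideanSpace ℝ (Fin n)) :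
    |z (li hn)| ≤ vPog n hn α z := by
  apply le_of_forall_pos_le_add
  intro ε hε
  by_cases hcase : |z (li hn)| ≤ ε
  · linarith [v_nonneg hn hα0 z]
  · push_neg at hcase
    have habs : 0 < |z (li hn)| := lt_trans hε hcase
    set s : ℝ := if 0 ≤ z (li hn) then 1 else -1 with hsdef
    have hs : s * z (li hn) = |z (li hn)| := by
      rcases le_or_gt 0 (z (li hn)) with h | h
      · rw [hsdef, if_pos h, one_mul, abs_of_nonneg h]
      · rw [hsdef, if_neg (not_le.2 h), neg_one_mul, abs_of_neg h]
    set t : ℝ := s * (1 - ε / |z (li hn)|) with htdef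
    have hq : 0 ≤ 1 - ε / |z (li hn)| := by
      have : ε / |z (li hn)| ≤ 1 := by
        rw [div_le_one habs]; exact hcase.le
      linarith
    have hq2 : 1 - ε / |z (li hn)| < 1 := by
      have : 0 < ε / |z (li hn)| := div_pos hε habs
      linarith
    have hsabs : |s| = 1 := by
      rcases le_or_gt 0 (z (li hn)) with h | h
      · rw [hsdef, if_pos h]; norm_num
      · rw [hsdef, if_neg (not_le.2 h)]; norm_num
    have htI : t ∈ Ioo (-1:ℝ) 1 := by
      rw [mem_Ioo, ← abs_lt, htdef, abs_mul, hsabs, one_mul, abs_of_nonneg hq]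
      exact hq2
    have h := attain hn hα0 z htI
    have hPhi : t * z (li hn) ≤ Phi n α hn z t := by
      unfold Phi
      have : 0 ≤ cc n * ‖Pj n z‖ ^ gg' n * ff n α t :=
        mul_nonneg (mul_nonneg (cc_pos hn).le (Real.rpow_nonneg (norm_nonneg _) _))
          (ff_nonneg hα0 (Ioo_subset_Icc_self htI))
      linarith
    have ht1 : t * z (li hn) = |z (li hn)| - ε := by
      rw [htdef]
      have : s * (1 - ε / |z (li hn)|) * z (li hn)
          = s * z (li hn) * (1 - ε / |z (li hn)|) := by ring
      rw [this, hs]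
      field_simp
    linarith

lemma exists_max (hn : 3 ≤ n) (hα0 : 0 < α) (z : EuclideanSpace ℝ (Fin n)) :
    ∃ t ∈ Icc (-1:ℝ) 1, IsMaxOn (Phi n α hn z) (Icc (-1:ℝ) 1) t := by
  apply IsCompact.exists_isMaxOn isCompact_Icc ⟨-1, by norm_num⟩
  apply Continuous.continuousOn
  unfold Phi
  exact (continuous_id.mul continuous_const).add (continuous_const.mul (ff_cont hn hα0))

lemma v_le_Phi_max (hn : 3 ≤ n) (z : EuclideanSpace ℝ (Fin n)) {t₀ : ℝ}
    (hmax : IsMaxOn (Phi n α hn z) (Icc (-1:ℝ) 1) t₀) :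
    vPog n hn α z ≤ Phi n α hn z t₀ := by
  apply csSup_le (nonemptyIm hn z)
  rintro w ⟨x, hx, rfl⟩
  have ht : x (li hn) ∈ Icc (-1:ℝ) 1 := Ioo_subset_Icc_self ((mem_X_iff hn x).1 hx)
  exact le_trans (elem_le hn z hx) (hmax ht)

lemma Phi_le_v (hn : 3 ≤ n) (hα0 : 0 < α) (z : EuclideanSpace ℝ (Fin n)) {t : ℝ}
    (ht : t ∈ Icc (-1:ℝ) 1) : Phi n α hn z t ≤ vPog n hn α z := by
  by_cases hI : t ∈ Ioo (-1:ℝ) 1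
  · exact attain hn hα0 z hI
  · have : t = -1 ∨ t = 1 := by
      rcases ht with ⟨h1, h2⟩
      rw [mem_Ioo] at hI
      push_neg at hI
      rcases eq_or_lt_of_le h1 with h | h
      · exact Or.inl h.symm
      · exact Or.inr (le_antisymm h2 (hI h))
    rcases this with h | h <;> subst h <;> unfold Phi
    · rw [ff_neg_one hn hα0]
      have := abs_le_v hn hα0 z
      have h2 : -1 * z (li hn) ≤ |z (li hn)| := by
        rw [neg_one_mul]; exact neg_le_abs _
      linarith
    · rw [ff_one hn hα0]
      have := abs_le_v hn hα0 z
      have h2 : 1 * z (li hn) ≤ |z (li hn)| := by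
        rw [one_mul]; exact le_abs_self _
      linarith

lemma u_nonneg (hn : 3 ≤ n) {x : EuclideanSpace ℝ (Fin n)} (hx : x ∈ XPog n hn) :
    0 ≤ uPog n hn α x := by
  rw [u_eq hn]
  have := one_sub_sq_pos ((mem_X_iff hn x).1 hx)
  positivity

lemma v_zero (hn : 3 ≤ n) (hα0 : 0 < α) : vPog n hn α 0 = 0 := by
  apply le_antisymm
  · apply csSup_le (nonemptyIm hn 0)
    rintro w ⟨x, hx, rfl⟩
    simp only [inner_zero_right]
    linarith [u_nonneg (α := α) hn hx]
  · exact v_nonneg hn hα0 0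

lemma v_convex (hn : 3 ≤ n) (hα0 : 0 < α) : ConvexOn ℝ Set.univ (vPog n hn α) := by
  refine ⟨convex_univ, ?_⟩
  intro y₁ _ y₂ _ a b ha hb hab
  show vPog n hn α _ ≤ _
  apply csSup_le (nonemptyIm hn _)
  rintro w ⟨x, hx, rfl⟩
  have hkey : ⟪x, a • y₁ + b • y₂⟫_ℝ - uPog n hn α x
      = a * (⟪x, y₁⟫_ℝ - uPog n hn α x) + b * (⟪x, y₂⟫_ℝ - uPog n hn α x) := by
    rw [inner_add_right, real_inner_smul_right, real_inner_smul_right]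
    linear_combination uPog n hn α x * hab
  simp only [smul_eq_mul]
  rw [hkey]
  have h1 : ⟪x, y₁⟫_ℝ - uPog n hn α x ≤ vPog n hn α y₁ :=
    le_csSup (bddA hn hα0 y₁) (Set.mem_image_of_mem _ hx)
  have h2 : ⟪x, y₂⟫_ℝ - uPog n hn α x ≤ vPog n hn α y₂ :=
    le_csSup (bddA hn hα0 y₂) (Set.mem_image_of_mem _ hx)
  exact add_le_add (mul_le_mul_of_nonneg_left h1 ha) (mul_le_mul_of_nonneg_left h2 hb)

lemma subdiff_eq (hn : 3 ≤ n) (hα0 : 0 < α) :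
    subdifferential (vPog n hn α) 0
      = {q : EuclideanSpace ℝ (Fin n) |
          (∀ i : Fin n, (i : ℕ) ≠ n - 1 → q i = 0) ∧
          lastCoord n hn q ∈ Set.Icc (-1 : ℝ) 1} := by
  have hγ' := gg'_pos hn
  have hβ := bb_pos hn
  have hcc := cc_pos hn
  ext q
  simp only [subdifferential, Set.mem_setOf_eq, lastCoord_eq]
  constructor
  · intro hq
    have hq' : ∀ z, ⟪q, z⟫_ℝ ≤ vPog n hn α z := by
      intro z
      have h := hq z
      rwa [v_zero hn hα0, sub_zero, zero_add] at h
    constructor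
    · intro i hi
      have h1 : ∀ w : ℝ, w * q i ≤ cc n * |w| ^ gg' n := by
        intro w
        have h := hq' (w • EuclideanSpace.single i 1)
        rw [real_inner_smul_right, EuclideanSpace.inner_single_right] at h
        have hle := v_le_coarse hn hα0 (w • EuclideanSpace.single i 1)
        have hl0 : (w • EuclideanSpace.single i 1 : EuclideanSpace ℝ (Fin n)) (li hn) = 0 := by
          have : i ≠ li hn := fun hc => hi (by rw [hc]; exact li_val hn)
          simp [PiLp.smul_apply, EuclideanSpace.single_apply, Ne.symm this]
        have hnn : ‖Pj n (w • EuclideanSpace.single i 1 : EuclideanSpace ℝ (Fin n))‖ ≤ |w| := by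
          calc ‖Pj n (w • EuclideanSpace.single i 1 : EuclideanSpace ℝ (Fin n))‖
              ≤ ‖(w • EuclideanSpace.single i 1 : EuclideanSpace ℝ (Fin n))‖ := norm_Pj_le _
            _ = |w| := by
                rw [norm_smul, EuclideanSpace.norm_single, Real.norm_eq_abs, norm_one, mul_one]
        have hpow : ‖Pj n (w • EuclideanSpace.single i 1 : EuclideanSpace ℝ (Fin n))‖ ^ gg' n
            ≤ |w| ^ gg' n := Real.rpow_le_rpow (norm_nonneg _) hnn hγ'.le
        rw [hl0] at hle
        simp only [abs_zero, zero_add] at hle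
        have := mul_le_mul_of_nonneg_left hpow hcc.le
        simp only [map_one, one_mul, starRingEnd_apply, star_trivial] at h
        linarith
      have key : ∀ ε : ℝ, 0 < ε → |q i| ≤ cc n * ε ^ (gg' n - 1) := by
        intro ε hε
        have ha := h1 ε
        have hb := h1 (-ε)
        rw [abs_of_pos hε] at ha
        rw [abs_neg, abs_of_pos hε] at hb
        have hεγ : ε ^ gg' n = ε ^ (gg' n - 1) * ε := by
          rw [← Real.rpow_add_one (ne_of_gt hε)]
          ring_nf
        rw [hεγ] at ha hb
        rcases abs_cases (q i) with ⟨he, _⟩ | ⟨he, _⟩ <;> rw [he]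
        · exact le_of_mul_le_mul_right (by nlinarith [mul_comm ε (q i)]) hε
        · exact le_of_mul_le_mul_right (by nlinarith [mul_comm ε (q i)]) hε
      have hexp_pos : 0 < gg' n - 1 := by rw [gg'_sub_one hn]; exact hβ
      have htend : Filter.Tendsto (fun ε : ℝ => cc n * ε ^ (gg' n - 1))
          (nhdsWithin 0 (Set.Ioi 0)) (nhds 0) := by
        have h0 : Filter.Tendsto (fun ε : ℝ => ε ^ (gg' n - 1)) (nhds 0) (nhds 0) := by
          have hct := Real.continuousAt_rpow_const 0 (gg' n - 1) (Or.inr hexp_pos.le)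
          have h00 : (0:ℝ) ^ (gg' n - 1) = 0 := Real.zero_rpow (ne_of_gt hexp_pos)
          simpa [ContinuousAt, h00] using hct
        have h2 := (h0.const_mul (cc n)).mono_left
          (nhdsWithin_le_nhds (s := Set.Ioi (0:ℝ)))
        simpa using h2
      have hq0' : |q i| ≤ 0 := by
        apply ge_of_tendsto htend
        filter_upwards [self_mem_nhdsWithin] with ε hε
        exact key ε hε
      rw [← abs_eq_zero]
      exact le_antisymm hq0' (abs_nonneg _)
    · have ha := hq' (EuclideanSpace.single (li hn) 1)
      have hb := hq' (EuclideanSpace.single (li hn) (-1))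
      rw [EuclideanSpace.inner_single_right] at ha hb
      have h1 : vPog n hn α (EuclideanSpace.single (li hn) 1) ≤ 1 := by
        have h := v_le_coarse hn hα0 (EuclideanSpace.single (li hn) 1)
        rw [Pj_single_last hn, norm_zero, Real.zero_rpow (ne_of_gt hγ')] at h
        simp only [EuclideanSpace.single_apply, if_pos rfl] at h
        simpa using h
      have h2 : vPog n hn α (EuclideanSpace.single (li hn) (-1)) ≤ 1 := by
        have h := v_le_coarse hn hα0 (EuclideanSpace.single (li hn) (-1))
        rw [Pj_single_last hn, norm_zero, Real.zero_rpow (ne_of_gt hγ')] at h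
        simp only [EuclideanSpace.single_apply, if_pos rfl] at h
        simpa using h
      simp only [starRingEnd_apply, star_trivial, map_neg, map_one, neg_one_mul,
        one_mul] at ha hb
      exact ⟨by linarith, by linarith⟩
  · rintro ⟨hq0, hql⟩ z
    rw [v_zero hn hα0, sub_zero, zero_add]
    have hPq : Pj n q = 0 := by
      ext i
      by_cases h : (i : ℕ) = n - 1
      · simp [Pj_apply, h]
      · simp [Pj_apply, h, hq0 i h]
    have hinner : ⟪q, z⟫_ℝ = q (li hn) * z (li hn) := by
      rw [inner_split hn q z, hPq]
      simp
    rw [hinner]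
    have habs : |q (li hn)| ≤ 1 := abs_le.2 ⟨hql.1, hql.2⟩
    calc q (li hn) * z (li hn) ≤ |q (li hn) * z (li hn)| := le_abs_self _
      _ = |q (li hn)| * |z (li hn)| := abs_mul _ _
      _ ≤ 1 * |z (li hn)| := mul_le_mul_of_nonneg_right habs (abs_nonneg _)
      _ = |z (li hn)| := one_mul _
      _ ≤ vPog n hn α z := abs_le_v hn hα0 z

lemma conjExp2 (hn : 3 ≤ n) (hα0 : 0 < α) (hα1 : α < (2 - 2 / (n : ℝ)) - 1) :
    (1 / mm n α).HolderConjugate (1 / (1 - mm n α)) := by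
  have hm0 := mm_pos hn hα0
  have hm1 := mm_lt_one hn hα1
  rw [Real.holderConjugate_iff]
  constructor
  · rw [lt_div_iff₀ hm0]; linarith
  · simp only [one_div, inv_inv]; ring

lemma coord_abs_le_norm (x : EuclideanSpace ℝ (Fin n)) (i : Fin n) : |x i| ≤ ‖x‖ := by
  rw [EuclideanSpace.norm_eq, ← Real.sqrt_sq_eq_abs]
  apply Real.sqrt_le_sqrt
  have h : (x i) ^ 2 = ‖x i‖ ^ 2 := by rw [Real.norm_eq_abs, sq_abs]
  rw [h]
  exact Finset.single_le_sum (f := fun j => ‖x j‖ ^ 2) (fun j _ => by positivity)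
    (Finset.mem_univ i)

/-- Refined upper bound on `Phi` near the axis. -/
lemma Phi_refined (hn : 3 ≤ n) (hα0 : 0 < α) (hα1 : α < (2 - 2 / (n : ℝ)) - 1)
    (z : EuclideanSpace ℝ (Fin n)) {t : ℝ} (ht : t ∈ Icc (-1:ℝ) 1)
    (hzl : z (li hn) ≠ 0) :
    Phi n α hn z t ≤ |z (li hn)|
      + (2 * mm n α) ^ (mm n α * (1 / (1 - mm n α)))
        * (cc n * ‖Pj n z‖ ^ gg' n) ^ (1 / (1 - mm n α))
        * |z (li hn)| ^ (-(mm n α * (1 / (1 - mm n α)))) := by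
  have hm0 := mm_pos hn hα0
  have hm1 := mm_lt_one hn hα1
  have hcc := cc_pos hn
  set m := mm n α with hmdef
  set q2 : ℝ := 1 / (1 - m) with hq2
  have hq21 : 1 ≤ q2 := by
    rw [hq2, le_div_iff₀ (by linarith)]; linarith
  set A : ℝ := cc n * ‖Pj n z‖ ^ gg' n with hA
  have hA0 : 0 ≤ A := mul_nonneg hcc.le (Real.rpow_nonneg (norm_nonneg _) _)
  set L : ℝ := |z (li hn)| with hL
  have hL0 : 0 < L := abs_pos.2 hzl
  set s : ℝ := if 0 ≤ z (li hn) then 1 else -1 with hs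
  have hsz : s * z (li hn) = L := by
    rcases le_or_gt 0 (z (li hn)) with h | h
    · rw [hs, if_pos h, one_mul, hL, abs_of_nonneg h]
    · rw [hs, if_neg (not_le.2 h), neg_one_mul, hL, abs_of_neg h]
  set w : ℝ := 1 - s * t with hw
  have hw0 : 0 ≤ w := by
    rcases le_or_gt 0 (z (li hn)) with h | h
    · rw [hw, hs, if_pos h, one_mul]; linarith [ht.2]
    · rw [hw, hs, if_neg (not_le.2 h), neg_one_mul]; linarith [ht.1]
  have hss : s * s = 1 := by
    rcases le_or_gt 0 (z (li hn)) with h | h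
    · rw [hs, if_pos h]; norm_num
    · rw [hs, if_neg (not_le.2 h)]; norm_num
  have htz : t * z (li hn) = (1 - w) * L := by
    calc t * z (li hn) = (s * s) * t * z (li hn) := by rw [hss]; ring
      _ = (s * t) * (s * z (li hn)) := by ring
      _ = (1 - w) * L := by rw [hsz, hw]; ring
  have hsq : 1 - t ^ 2 ≤ 2 * w := by
    rcases le_or_gt 0 (z (li hn)) with h | h
    · rw [hw, hs, if_pos h, one_mul]; nlinarith [ht.1, ht.2]
    · rw [hw, hs, if_neg (not_le.2 h), neg_one_mul]; nlinarith [ht.1, ht.2]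
  have hffle : ff n α t ≤ (2 * w) ^ m := by
    unfold ff
    exact Real.rpow_le_rpow (one_sub_sq_nonneg ht) hsq hm0.le
  set lam : ℝ := (L / m) ^ m with hlam
  have hlam0 : 0 < lam := Real.rpow_pos_of_pos (by positivity) _
  have hyoung := Real.young_inequality_of_nonneg
    (mul_nonneg (Real.rpow_nonneg hw0 m) hlam0.le)
    (div_nonneg (mul_nonneg (Real.rpow_nonneg (by norm_num : (0:ℝ) ≤ 2) m) hA0) hlam0.le)
    (conjExp2 hn hα0 hα1)
  rw [← hmdef, ← hq2] at hyoung
  have hXY : w ^ m * lam * ((2:ℝ) ^ m * A / lam) = A * (2 * w) ^ m := by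
    rw [Real.mul_rpow (by norm_num : (0:ℝ) ≤ 2) hw0]
    field_simp
  have hXp : (w ^ m * lam) ^ (1 / m) / (1 / m) = w * L := by
    rw [Real.mul_rpow (Real.rpow_nonneg hw0 m) hlam0.le,
      ← Real.rpow_mul hw0, mul_one_div, div_self (ne_of_gt hm0), Real.rpow_one,
      hlam, ← Real.rpow_mul (by positivity : (0:ℝ) ≤ L / m), mul_one_div,
      div_self (ne_of_gt hm0), Real.rpow_one]
    field_simp
  have hLm : (0:ℝ) < L ^ m := Real.rpow_pos_of_pos hL0 _
  have hmm : (0:ℝ) < m ^ m := Real.rpow_pos_of_pos hm0 _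
  have hYeq : ((2:ℝ) ^ m * A / lam) = A * ((2 * m) ^ m * L ^ (-m)) := by
    rw [hlam, Real.div_rpow hL0.le hm0.le, Real.rpow_neg hL0.le,
      Real.mul_rpow (by norm_num : (0:ℝ) ≤ 2) hm0.le]
    field_simp
  have hYq : ((2:ℝ) ^ m * A / lam) ^ q2 / q2
      ≤ (2 * m) ^ (m * q2) * A ^ q2 * L ^ (-(m * q2)) := by
    have h2m : (0:ℝ) ≤ (2 * m) ^ m * L ^ (-m) :=
      mul_nonneg (Real.rpow_nonneg (by positivity) _) (Real.rpow_nonneg hL0.le _)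
    have hYpow : ((2:ℝ) ^ m * A / lam) ^ q2
        = (2 * m) ^ (m * q2) * A ^ q2 * L ^ (-(m * q2)) := by
      rw [hYeq, Real.mul_rpow hA0 h2m,
        Real.mul_rpow (Real.rpow_nonneg (by positivity) _) (Real.rpow_nonneg hL0.le _),
        ← Real.rpow_mul (by positivity : (0:ℝ) ≤ 2 * m),
        ← Real.rpow_mul hL0.le, neg_mul]
      ring
    rw [hYpow]
    apply div_le_self _ hq21
    positivity
  have hfinal : A * (2 * w) ^ m ≤ w * L
      + (2 * m) ^ (m * q2) * A ^ q2 * L ^ (-(m * q2)) := by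
    rw [← hXY]
    calc w ^ m * lam * ((2:ℝ) ^ m * A / lam)
        ≤ (w ^ m * lam) ^ (1 / m) / (1 / m) + ((2:ℝ) ^ m * A / lam) ^ q2 / q2 := hyoung
      _ ≤ w * L + (2 * m) ^ (m * q2) * A ^ q2 * L ^ (-(m * q2)) := by
          rw [hXp]; exact add_le_add_right hYq _
  unfold Phi
  rw [htz, ← hA]
  linarith [mul_le_mul_of_nonneg_left hffle hA0, hfinal]

/-- Gradient of `v` on the `x_n`-axis. -/
lemma gradAxis (hn : 3 ≤ n) (hα0 : 0 < α) (hα1 : α < (2 - 2 / (n : ℝ)) - 1)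
    {b σ : ℝ} (hσ : σ = 1 ∨ σ = -1) (hb : 0 < σ * b) :
    HasGradientAt (vPog n hn α)
      (σ • EuclideanSpace.single (li hn) (1:ℝ))
      (b • EuclideanSpace.single (li hn) (1:ℝ)) := by
  have hm0 := mm_pos hn hα0
  have hm1 := mm_lt_one hn hα1
  have hcc := cc_pos hn
  have hγ' := one_lt_gg' hn
  set m := mm n α with hmdef
  set q2 : ℝ := 1 / (1 - m) with hq2
  have hq21 : 1 ≤ q2 := by rw [hq2, le_div_iff₀ (by linarith)]; linarith
  have hq2pos : 0 < q2 := lt_of_lt_of_le one_pos hq21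
  set p0 : ℝ := gg' n * q2 with hp0
  have hp01 : 1 < p0 := by
    calc (1:ℝ) < gg' n := hγ'
      _ = gg' n * 1 := (mul_one _).symm
      _ ≤ gg' n * q2 := mul_le_mul_of_nonneg_left hq21 (by linarith)
  set y₀ : EuclideanSpace ℝ (Fin n) := b • EuclideanSpace.single (li hn) (1:ℝ) with hy₀
  have hbne : b ≠ 0 := by
    intro h; rw [h, mul_zero] at hb; exact lt_irrefl 0 hb
  have hy₀l : y₀ (li hn) = b := by
    rw [hy₀]; simp [PiLp.smul_apply, EuclideanSpace.single_apply]
  have hPy₀ : Pj n y₀ = 0 := by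
    rw [hy₀, _root_.map_smul, Pj_single_last hn, smul_zero]
  have habsb : |b| = σ * b := by
    rcases hσ with h | h <;> subst h
    · rw [one_mul] at hb ⊢; exact abs_of_pos hb
    · rw [neg_one_mul] at hb ⊢
      rw [abs_of_neg (by linarith)]
  have hvy₀ : vPog n hn α y₀ = σ * b := by
    apply le_antisymm
    · have h := v_le_coarse hn hα0 y₀
      rw [hy₀l, hPy₀, norm_zero, Real.zero_rpow (ne_of_gt (gg'_pos hn))] at h
      rw [← habsb]
      simpa using h
    · rw [← habsb, ← hy₀l]
      exact abs_le_v hn hα0 y₀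
  rw [hasGradientAt_iff_isLittleO]
  rw [Asymptotics.isLittleO_iff]
  intro ε hε
  -- the constant in the estimate
  set M : ℝ := (2 * m) ^ (m * q2) * (cc n) ^ q2 * (|b| / 2) ^ (-(m * q2)) with hM
  have hM0 : 0 ≤ M := by
    apply mul_nonneg (mul_nonneg (Real.rpow_nonneg (by positivity) _)
      (Real.rpow_nonneg hcc.le _)) (Real.rpow_nonneg (by positivity) _)
  have htend : Filter.Tendsto (fun z : EuclideanSpace ℝ (Fin n) => M * ‖z - y₀‖ ^ (p0 - 1))
      (nhds y₀) (nhds 0) := by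
    have h1 : Filter.Tendsto (fun z : EuclideanSpace ℝ (Fin n) => ‖z - y₀‖) (nhds y₀)
        (nhds 0) := by
      have hc : Continuous (fun z : EuclideanSpace ℝ (Fin n) => ‖z - y₀‖) := by fun_prop
      have h2 := hc.tendsto y₀
      simpa using h2
    have h2 : Filter.Tendsto (fun x : ℝ => M * x ^ (p0 - 1)) (nhds 0) (nhds 0) := by
      have hct := Real.continuousAt_rpow_const 0 (p0 - 1) (Or.inr (by linarith : (0:ℝ) ≤ p0 - 1))
      have h00 : (0:ℝ) ^ (p0 - 1) = 0 :=
        Real.zero_rpow (by intro h; linarith)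
      have hct2 : Filter.Tendsto (fun x : ℝ => x ^ (p0 - 1)) (nhds 0) (nhds 0) := by
        simpa [ContinuousAt, h00] using hct
      simpa using hct2.const_mul M
    exact h2.comp h1
  have hev1 : ∀ᶠ z in nhds y₀, M * ‖z - y₀‖ ^ (p0 - 1) < ε := htend.eventually_lt_const hε
  have hev2 : ∀ᶠ z in nhds y₀, ‖z - y₀‖ < |b| / 2 := by
    have h1 : Filter.Tendsto (fun z : EuclideanSpace ℝ (Fin n) => ‖z - y₀‖) (nhds y₀)
        (nhds 0) := by
      have hc : Continuous (fun z : EuclideanSpace ℝ (Fin n) => ‖z - y₀‖) := by fun_prop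
      have h2 := hc.tendsto y₀
      simpa using h2
    have hb2 : (0:ℝ) < |b| / 2 := by
      have : 0 < |b| := abs_pos.2 hbne
      linarith
    exact h1.eventually_lt_const hb2
  filter_upwards [hev1, hev2] with z h1 h2
  -- rewrite the expression
  have hinner : ⟪σ • EuclideanSpace.single (li hn) (1:ℝ), z - y₀⟫_ℝ = σ * (z (li hn) - b) := by
    rw [real_inner_smul_left, EuclideanSpace.inner_single_left]
    have : (z - y₀) (li hn) = z (li hn) - b := by
      rw [PiLp.sub_apply, hy₀l]
    rw [this]
    simp
  rw [hvy₀, hinner]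
  have hexpr : vPog n hn α z - σ * b - σ * (z (li hn) - b) = vPog n hn α z - σ * z (li hn) := by
    ring
  rw [hexpr]
  by_cases hzy : z = y₀
  · subst hzy
    rw [hy₀l, ← habsb]
    have : vPog n hn α y₀ - |b| = 0 := by rw [hvy₀, habsb]; ring
    rw [this]
    simp
  · have hnpos : 0 < ‖z - y₀‖ := by
      rw [norm_pos_iff, sub_ne_zero]; exact hzy
    -- coordinate bounds
    have hcoord : |z (li hn) - b| ≤ ‖z - y₀‖ := by
      have := coord_abs_le_norm (z - y₀) (li hn)
      rw [PiLp.sub_apply, hy₀l] at this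
      exact this
    have hzl_lb : |b| / 2 ≤ |z (li hn)| := by
      have h3 : |z (li hn) - b| < |b| / 2 := lt_of_le_of_lt hcoord h2
      have := abs_sub_abs_le_abs_sub (b) (z (li hn))
      rw [abs_sub_comm] at this
      linarith [abs_sub_abs_le_abs_sub b (z (li hn))]
    have hzl_ne : z (li hn) ≠ 0 := by
      intro h; rw [h, abs_zero] at hzl_lb
      have : 0 < |b| := abs_pos.2 hbne
      linarith
    have hsign : σ * z (li hn) = |z (li hn)| := by
      have h3 : |z (li hn) - b| < |b| / 2 := lt_of_le_of_lt hcoord h2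
      rcases hσ with h | h <;> subst h
      · rw [one_mul] at hb ⊢
        have hbpos : 0 < b := hb
        have : 0 < z (li hn) := by
          rw [abs_of_pos hbpos] at h3
          cases' abs_lt.1 h3 with hl hr
          linarith
        rw [abs_of_pos this]
      · rw [neg_one_mul] at hb ⊢
        have hbneg : b < 0 := by linarith
        have : z (li hn) < 0 := by
          rw [abs_of_neg hbneg] at h3
          cases' abs_lt.1 h3 with hl hr
          linarith
        rw [abs_of_neg this]
    -- lower and upper bounds
    have hlow : 0 ≤ vPog n hn α z - σ * z (li hn) := by
      rw [hsign]
      linarith [abs_le_v hn hα0 z]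
    obtain ⟨t₀, ht₀I, ht₀max⟩ := exists_max hn hα0 z
    have hup := le_trans (v_le_Phi_max hn z ht₀max)
      (Phi_refined hn hα0 hα1 z ht₀I hzl_ne)
    -- bound the remainder term by M * ‖z-y₀‖ ^ p0
    have hPjz : ‖Pj n z‖ ≤ ‖z - y₀‖ := by
      have : Pj n z = Pj n (z - y₀) := by rw [map_sub, hPy₀, sub_zero]
      rw [this]
      exact norm_Pj_le _
    have hterm : (cc n * ‖Pj n z‖ ^ gg' n) ^ q2 ≤ (cc n) ^ q2 * ‖z - y₀‖ ^ (gg' n * q2) := by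
      rw [Real.mul_rpow hcc.le (Real.rpow_nonneg (norm_nonneg _) _),
        ← Real.rpow_mul (norm_nonneg _)]
      apply mul_le_mul_of_nonneg_left _ (Real.rpow_nonneg hcc.le _)
      exact Real.rpow_le_rpow (norm_nonneg _) hPjz (by positivity)
    have hterm2 : |z (li hn)| ^ (-(m * q2)) ≤ (|b| / 2) ^ (-(m * q2)) := by
      apply Real.rpow_le_rpow_of_nonpos (by positivity) hzl_lb
      have : 0 ≤ m * q2 := by positivity
      linarith
    have hupp2 : vPog n hn α z - σ * z (li hn) ≤ M * ‖z - y₀‖ ^ p0 := by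
      rw [hsign]
      have e1 : (2 * m) ^ (m * q2) * (cc n * ‖Pj n z‖ ^ gg' n) ^ q2
            * |z (li hn)| ^ (-(m * q2))
          ≤ (2 * m) ^ (m * q2) * ((cc n) ^ q2 * ‖z - y₀‖ ^ (gg' n * q2))
            * (|b| / 2) ^ (-(m * q2)) := by
        apply mul_le_mul
        · exact mul_le_mul_of_nonneg_left hterm (Real.rpow_nonneg (by positivity) _)
        · exact hterm2
        · exact Real.rpow_nonneg (abs_nonneg _) _
        · positivity
      have e2 : (2 * m) ^ (m * q2) * ((cc n) ^ q2 * ‖z - y₀‖ ^ (gg' n * q2))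
            * (|b| / 2) ^ (-(m * q2)) = M * ‖z - y₀‖ ^ p0 := by
        rw [hM, hp0]; ring
      linarith [hup, e1, e2.le, e2.ge]
    have hpow : ‖z - y₀‖ ^ p0 = ‖z - y₀‖ ^ (p0 - 1) * ‖z - y₀‖ := by
      rw [← Real.rpow_add_one (ne_of_gt hnpos)]
      ring_nf
    rw [Real.norm_eq_abs, abs_of_nonneg hlow]
    calc vPog n hn α z - σ * z (li hn) ≤ M * ‖z - y₀‖ ^ p0 := hupp2
      _ = M * ‖z - y₀‖ ^ (p0 - 1) * ‖z - y₀‖ := by rw [hpow]; ring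
      _ ≤ ε * ‖z - y₀‖ := mul_le_mul_of_nonneg_right h1.le hnpos.le

lemma rpow_subadd {p : ℝ} (hp0 : 0 < p) (hp1 : p ≤ 1) {x y : ℝ} (hx : 0 ≤ x) (hy : 0 ≤ y) :
    (x + y) ^ p ≤ x ^ p + y ^ p := by
  lift x to ℝ≥0 using hx
  lift y to ℝ≥0 using hy
  have h := NNReal.rpow_add_rpow_le x y hp0 hp1
  simp only [NNReal.rpow_one, one_div_one, NNReal.rpow_natCast] at h
  have h2 : (x + y) ^ p ≤ ((x ^ p + y ^ p) ^ (1 / p)) ^ p := by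
    apply NNReal.rpow_le_rpow _ hp0.le
    simpa using h
  have h3 : ((x ^ p + y ^ p) ^ (1 / p)) ^ p = x ^ p + y ^ p := by
    rw [← NNReal.rpow_mul, one_div_mul_cancel (ne_of_gt hp0), NNReal.rpow_one]
  rw [h3] at h2
  exact_mod_cast h2

lemma rpow_holder {p : ℝ} (hp0 : 0 < p) (hp1 : p ≤ 1) {a b : ℝ} (ha : 0 ≤ a) (hb : 0 ≤ b) :
    |a ^ p - b ^ p| ≤ |a - b| ^ p := by
  have key : ∀ u v : ℝ, 0 ≤ u → 0 ≤ v → v ≤ u → u ^ p - v ^ p ≤ (u - v) ^ p := by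
    intro u v hu hv huv
    have h := rpow_subadd hp0 hp1 (by linarith : (0:ℝ) ≤ u - v) hv
    rw [sub_add_cancel] at h
    linarith
  rcases le_total b a with h | h
  · rw [abs_of_nonneg (by linarith : (0:ℝ) ≤ a - b),
      abs_of_nonneg (sub_nonneg.2 (Real.rpow_le_rpow hb h hp0.le))]
    exact key a b ha hb h
  · rw [abs_of_nonpos (by linarith : a - b ≤ 0),
      abs_of_nonpos (sub_nonpos.2 (Real.rpow_le_rpow ha h hp0.le)), neg_sub, neg_sub]
    exact key b a hb ha h

lemma ff_holder (hn : 3 ≤ n) (hα0 : 0 < α) (hα1 : α < (2 - 2 / (n : ℝ)) - 1)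
    {s t : ℝ} (hs : s ∈ Icc (-1:ℝ) 1) (ht : t ∈ Icc (-1:ℝ) 1) :
    |ff n α s - ff n α t| ≤ 2 ^ mm n α * |s - t| ^ mm n α := by
  have hm0 := mm_pos hn hα0
  have hm1 := mm_lt_one hn hα1
  unfold ff
  calc |(1 - s ^ 2) ^ mm n α - (1 - t ^ 2) ^ mm n α|
      ≤ |(1 - s ^ 2) - (1 - t ^ 2)| ^ mm n α :=
        rpow_holder hm0 hm1.le (one_sub_sq_nonneg hs) (one_sub_sq_nonneg ht)
    _ ≤ (2 * |s - t|) ^ mm n α := by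
        apply Real.rpow_le_rpow (abs_nonneg _) _ hm0.le
        have h1 : (1 - s ^ 2) - (1 - t ^ 2) = (t - s) * (t + s) := by ring
        rw [h1, abs_mul]
        have h2 : |t + s| ≤ 2 := by
          rw [abs_le]
          constructor <;> nlinarith [hs.1, hs.2, ht.1, ht.2]
        calc |t - s| * |t + s| ≤ |t - s| * 2 := mul_le_mul_of_nonneg_left h2 (abs_nonneg _)
          _ = 2 * |s - t| := by rw [abs_sub_comm]; ring
    _ = 2 ^ mm n α * |s - t| ^ mm n α :=
        Real.mul_rpow (by norm_num) (abs_nonneg _)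

set_option maxHeartbeats 2000000 in
/-- Differentiability of `v` off the axis. -/
lemma diff_interior (hn : 3 ≤ n) (hα0 : 0 < α) (hα1 : α < (2 - 2 / (n : ℝ)) - 1)
    {y : EuclideanSpace ℝ (Fin n)} (hy : Pj n y ≠ 0) :
    DifferentiableAt ℝ (vPog n hn α) y := by
  have hm0 := mm_pos hn hα0
  have hm1 := mm_lt_one hn hα1
  have hcc := cc_pos hn
  have hγ' := gg'_pos hn
  set m := mm n α with hmdef
  have hay : 0 < ‖Pj n y‖ := norm_pos_iff.2 hy
  set AF : EuclideanSpace ℝ (Fin n) → ℝ := fun z => cc n * ‖Pj n z‖ ^ gg' n with hAF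
  have hAy : 0 < AF y := mul_pos hcc (Real.rpow_pos_of_pos hay _)
  set κ : ℝ := 2 * m * AF y with hκ
  have hκ0 : 0 < κ := by positivity
  -- maximizer selection
  have hmaxsel : ∀ z : EuclideanSpace ℝ (Fin n),
      ∃ t, t ∈ Icc (-1:ℝ) 1 ∧ IsMaxOn (Phi n α hn z) (Icc (-1:ℝ) 1) t := by
    intro z
    obtain ⟨t, h1, h2⟩ := exists_max hn hα0 z
    exact ⟨t, h1, h2⟩
  choose T hTmem hTmax using hmaxsel
  have hvle : ∀ z, vPog n hn α z ≤ Phi n α hn z (T z) := fun z => v_le_Phi_max hn z (hTmax z)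
  have hvge : ∀ z t, t ∈ Icc (-1:ℝ) 1 → Phi n α hn z t ≤ vPog n hn α z :=
    fun z t ht => Phi_le_v hn hα0 z ht
  have hvy : vPog n hn α y = Phi n α hn y (T y) :=
    le_antisymm (hvle y) (hvge y (T y) (hTmem y))
  -- differentiability of AF at y
  have hnormdiff : DifferentiableAt ℝ (fun z : EuclideanSpace ℝ (Fin n) => ‖Pj n z‖) y := by
    have h1 : ContDiffAt ℝ 1 (fun w : EuclideanSpace ℝ (Fin n) => ‖w‖) (Pj n y) :=
      contDiffAt_norm ℝ hy
    exact (h1.differentiableAt one_ne_zero).comp y (Pj n).differentiableAt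
  have hAdiff : DifferentiableAt ℝ AF y := by
    apply DifferentiableAt.const_mul
    exact hnormdiff.rpow_const (Or.inl (ne_of_gt hay))
  -- the lower supporting function G
  set G : EuclideanSpace ℝ (Fin n) → ℝ := fun z => Phi n α hn z (T y) with hG
  have hGdiff : DifferentiableAt ℝ G y := by
    have h1 : DifferentiableAt ℝ (fun z : EuclideanSpace ℝ (Fin n) => z (li hn)) y :=
      (EuclideanSpace.proj (li hn) : EuclideanSpace ℝ (Fin n) →L[ℝ] ℝ).differentiableAt
    have h2 : DifferentiableAt ℝ
        (fun z : EuclideanSpace ℝ (Fin n) => T y * z (li hn) + AF z * ff n α (T y)) y :=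
      (h1.const_mul (T y)).add (hAdiff.mul_const _)
    have : G = fun z : EuclideanSpace ℝ (Fin n) =>
        T y * z (li hn) + AF z * ff n α (T y) := by
      funext z
      rw [hG]
      unfold Phi
      rw [hAF]
    rw [this]
    exact h2
  have hGfd : HasFDerivAt G (fderiv ℝ G y) y := hGdiff.hasFDerivAt
  -- strong concavity of Phi y
  have hconc : ConcaveOn ℝ (Icc (-1:ℝ) 1)
      (fun t => Phi n α hn y t + κ / 2 * t ^ 2) := by
    apply concaveOn_of_hasDerivWithinAt2_nonpos (convex_Icc _ _)
      (f' := fun t => y (li hn)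
        + AF y * (-(2 * t) * m * (1 - t ^ 2) ^ (m - 1)) + κ / 2 * (2 * t))
      (f'' := fun t => AF y * (-2 * m * (1 - t ^ 2) ^ (m - 1)
        + -(2 * t) * m * (-(2 * t) * (m - 1) * (1 - t ^ 2) ^ (m - 2))) + κ / 2 * 2)
    · apply Continuous.continuousOn
      have hPhiCont : Continuous (Phi n α hn y) := by
        unfold Phi
        exact (continuous_id.mul continuous_const).add
          (continuous_const.mul (ff_cont hn hα0))
      exact hPhiCont.add (continuous_const.mul (continuous_pow 2))
    · intro t htI
      rw [interior_Icc] at htI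
      have hne : (1:ℝ) - t ^ 2 ≠ 0 := ne_of_gt (one_sub_sq_pos htI)
      have hbase : HasDerivAt (fun u : ℝ => 1 - u ^ 2) (-(2 * t)) t := by
        have h := (hasDerivAt_pow 2 t).const_sub (1:ℝ)
        simpa using h
      have hffder : HasDerivAt (fun u : ℝ => (1 - u ^ 2) ^ m)
          (-(2 * t) * m * (1 - t ^ 2) ^ (m - 1)) t := by
        exact hbase.rpow_const (p := m) (Or.inl hne)
      have h1 : HasDerivAt (fun u : ℝ => u * y (li hn)) (y (li hn)) t :=
        hasDerivAt_mul_const _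
      have h2 : HasDerivAt (fun u : ℝ => AF y * (1 - u ^ 2) ^ m)
          (AF y * (-(2 * t) * m * (1 - t ^ 2) ^ (m - 1))) t := hffder.const_mul (AF y)
      have h3 : HasDerivAt (fun u : ℝ => κ / 2 * u ^ 2) (κ / 2 * (2 * t)) t := by
        have h := (hasDerivAt_pow 2 t).const_mul (κ / 2)
        simpa using h
      have hsum := (h1.add h2).add h3
      have heq : (fun t : ℝ => Phi n α hn y t + κ / 2 * t ^ 2)
          = fun u : ℝ => u * y (li hn) + AF y * (1 - u ^ 2) ^ m + κ / 2 * u ^ 2 := by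
        funext u
        unfold Phi ff
        rw [hAF]
      rw [heq]
      exact hsum.hasDerivWithinAt
    · intro t htI
      rw [interior_Icc] at htI
      have hne : (1:ℝ) - t ^ 2 ≠ 0 := ne_of_gt (one_sub_sq_pos htI)
      have hbase : HasDerivAt (fun u : ℝ => 1 - u ^ 2) (-(2 * t)) t := by
        have h := (hasDerivAt_pow 2 t).const_sub (1:ℝ)
        simpa using h
      have hp : HasDerivAt (fun u : ℝ => -(2 * u) * m) (-2 * m) t := by
        have h := (((hasDerivAt_id t).const_mul (2:ℝ)).neg).mul_const m
        simpa using h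
      have hq : HasDerivAt (fun u : ℝ => (1 - u ^ 2) ^ (m - 1))
          (-(2 * t) * (m - 1) * (1 - t ^ 2) ^ (m - 2)) t := by
        have h := hbase.rpow_const (p := m - 1) (Or.inl hne)
        have hexp : m - 1 - 1 = m - 2 := by ring
        rw [hexp] at h
        exact h
      have hpq := hp.mul hq
      have h2 : HasDerivAt (fun u : ℝ => AF y * (-(2 * u) * m * (1 - u ^ 2) ^ (m - 1)))
          (AF y * (-2 * m * (1 - t ^ 2) ^ (m - 1)
            + -(2 * t) * m * (-(2 * t) * (m - 1) * (1 - t ^ 2) ^ (m - 2)))) t := by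
        have h := hpq.const_mul (AF y)
        exact h
      have h1 : HasDerivAt (fun _ : ℝ => y (li hn)) 0 t := hasDerivAt_const _ _
      have h3 : HasDerivAt (fun u : ℝ => κ / 2 * (2 * u)) (κ / 2 * 2) t := by
        have h := ((hasDerivAt_id t).const_mul (2:ℝ)).const_mul (κ / 2)
        simpa using h
      have hsum := (h1.add h2).add h3
      have heq : (fun t : ℝ => y (li hn)
            + AF y * (-(2 * t) * m * (1 - t ^ 2) ^ (m - 1)) + κ / 2 * (2 * t))
          = fun u : ℝ => y (li hn)
            + AF y * (-(2 * u) * m * (1 - u ^ 2) ^ (m - 1)) + κ / 2 * (2 * u) := rfl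
      have hval : 0 + AF y * (-2 * m * (1 - t ^ 2) ^ (m - 1)
            + -(2 * t) * m * (-(2 * t) * (m - 1) * (1 - t ^ 2) ^ (m - 2))) + κ / 2 * 2
          = AF y * (-2 * m * (1 - t ^ 2) ^ (m - 1)
            + -(2 * t) * m * (-(2 * t) * (m - 1) * (1 - t ^ 2) ^ (m - 2))) + κ / 2 * 2 := by
        ring
      change HasDerivAt (fun u : ℝ => y (li hn)
            + AF y * (-(2 * u) * m * (1 - u ^ 2) ^ (m - 1)) + κ / 2 * (2 * u)) _ t at hsum
      rw [← hval]
      exact hsum.hasDerivWithinAt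
    · intro t htI
      rw [interior_Icc] at htI
      have hY : 1 ≤ (1 - t ^ 2) ^ (m - 1) :=
        Real.one_le_rpow_of_pos_of_le_one_of_nonpos (one_sub_sq_pos htI)
          (by nlinarith [htI.1, htI.2]) (by linarith)
      have hX : 0 ≤ (1 - t ^ 2) ^ (m - 2) :=
        Real.rpow_nonneg (one_sub_sq_nonneg (Ioo_subset_Icc_self htI)) _
      have hterm : (m - 1) * ((1 - t ^ 2) ^ (m - 2) * (4 * t ^ 2)) ≤ 0 :=
        mul_nonpos_of_nonpos_of_nonneg (by linarith) (by positivity)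
      have hfac : -2 * (1 - t ^ 2) ^ (m - 1)
          + 4 * t ^ 2 * (m - 1) * (1 - t ^ 2) ^ (m - 2) + 2 ≤ 0 := by
        nlinarith [hY, hterm]
      have hmain : AF y * (-2 * m * (1 - t ^ 2) ^ (m - 1)
            + -(2 * t) * m * (-(2 * t) * (m - 1) * (1 - t ^ 2) ^ (m - 2))) + κ / 2 * 2
          = m * AF y * (-2 * (1 - t ^ 2) ^ (m - 1)
            + 4 * t ^ 2 * (m - 1) * (1 - t ^ 2) ^ (m - 2) + 2) := by
        rw [hκ]; ring
      rw [hmain]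
      apply mul_nonpos_of_nonneg_of_nonpos (by positivity) hfac
  -- strong concavity inequality at the maximizer
  have hSC : ∀ t ∈ Icc (-1:ℝ) 1,
      Phi n α hn y t ≤ Phi n α hn y (T y) - κ / 4 * (t - T y) ^ 2 := by
    intro t htI
    have hcc2 := hconc.2 htI (hTmem y) (by norm_num : (0:ℝ) ≤ 1/2)
      (by norm_num : (0:ℝ) ≤ 1/2) (by norm_num)
    have hmid : (1/2 : ℝ) • t + (1/2 : ℝ) • (T y) ∈ Icc (-1:ℝ) 1 :=
      (convex_Icc (-1:ℝ) 1) htI (hTmem y) (by norm_num) (by norm_num) (by norm_num)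
    have hmax := (isMaxOn_iff.1 (hTmax y)) _ hmid
    simp only [smul_eq_mul] at hcc2 hmax
    nlinarith [hcc2, hmax]
  -- quantitative argmax stability
  have hPhidiff : ∀ z t, t ∈ Icc (-1:ℝ) 1 →
      |Phi n α hn z t - Phi n α hn y t|
        ≤ |z (li hn) - y (li hn)| + |AF z - AF y| := by
    intro z t htI
    have heq : Phi n α hn z t - Phi n α hn y t
        = t * (z (li hn) - y (li hn)) + (AF z - AF y) * ff n α t := by
      unfold Phi; rw [hAF]; ring
    rw [heq]
    have hffabs : |ff n α t| ≤ 1 := by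
      rw [abs_of_nonneg (ff_nonneg hα0 htI)]
      exact ff_le_one hn hα0 htI
    calc |t * (z (li hn) - y (li hn)) + (AF z - AF y) * ff n α t|
        ≤ |t * (z (li hn) - y (li hn))| + |(AF z - AF y) * ff n α t| := abs_add_le _ _
      _ = |t| * |z (li hn) - y (li hn)| + |AF z - AF y| * |ff n α t| := by
          rw [abs_mul, abs_mul]
      _ ≤ 1 * |z (li hn) - y (li hn)| + |AF z - AF y| * 1 := by
          apply add_le_add
          · exact mul_le_mul_of_nonneg_right (abs_le.2 ⟨htI.1, htI.2⟩) (abs_nonneg _)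
          · exact mul_le_mul_of_nonneg_left hffabs (abs_nonneg _)
      _ = |z (li hn) - y (li hn)| + |AF z - AF y| := by ring
  have hquant : ∀ z, κ / 4 * (T z - T y) ^ 2
      ≤ 2 * (|z (li hn) - y (li hn)| + |AF z - AF y|) := by
    intro z
    have h1 := hSC (T z) (hTmem z)
    have h2 := (isMaxOn_iff.1 (hTmax z)) _ (hTmem y)
    have h3 := hPhidiff z (T z) (hTmem z)
    have h4 := hPhidiff z (T y) (hTmem y)
    have h3' := abs_le.1 h3
    have h4' := abs_le.1 h4
    linarith [h3'.1, h3'.2, h4'.1, h4'.2]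
  -- now the sandwich; prove HasFDerivAt
  have hfd : HasFDerivAt (vPog n hn α) (fderiv ℝ G y) y := by
    apply HasFDerivAt.of_isLittleO
    have he₁ : (fun z => G z - G y - (fderiv ℝ G y) (z - y)) =o[nhds y] fun z => z - y :=
      hGfd.isLittleO
    rw [Asymptotics.isLittleO_iff]
    intro ε hε
    obtain ⟨CA, hCA0, hCAw⟩ := hAdiff.hasFDerivAt.isBigO_sub.exists_pos
    have hCAb := hCAw.bound
    set CT : ℝ := Real.sqrt (8 * (1 + CA) / κ) with hCT
    have hCT0 : 0 ≤ CT := Real.sqrt_nonneg _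
    -- eventual bounds
    have hnormt : Filter.Tendsto (fun z : EuclideanSpace ℝ (Fin n) => ‖z - y‖)
        (nhds y) (nhds 0) := by
      have hc : Continuous (fun z : EuclideanSpace ℝ (Fin n) => ‖z - y‖) := by fun_prop
      simpa using hc.tendsto y
    have hev2 : ∀ᶠ z in nhds y, CT * ‖z - y‖ ^ (1/2 : ℝ) < ε / 3 := by
      have hct := Real.continuousAt_rpow_const 0 (1/2 : ℝ) (Or.inr (by norm_num))
      have h00 : (0:ℝ) ^ (1/2 : ℝ) = 0 := Real.zero_rpow (by norm_num)
      have hct2 : Filter.Tendsto (fun x : ℝ => CT * x ^ (1/2 : ℝ)) (nhds 0) (nhds 0) := by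
        have h := (hct.const_smul CT).tendsto
        simp only [Pi.smul_def, smul_eq_mul, h00, mul_zero] at h
        exact h
      exact (hct2.comp hnormt).eventually_lt_const (by positivity)
    have hev3 : ∀ᶠ z in nhds y,
        CA * (2 ^ m * (CT ^ m * ‖z - y‖ ^ (m/2 : ℝ))) < ε / 3 := by
      have hct := Real.continuousAt_rpow_const 0 (m/2 : ℝ) (Or.inr (by positivity))
      have h00 : (0:ℝ) ^ (m/2 : ℝ) = 0 := Real.zero_rpow (by positivity)
      have hct2 : Filter.Tendsto
          (fun x : ℝ => CA * (2 ^ m * (CT ^ m * x ^ (m/2 : ℝ)))) (nhds 0) (nhds 0) := by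
        have h := (hct.const_smul (CA * (2 ^ m * CT ^ m))).tendsto
        simp only [Pi.smul_def, smul_eq_mul, h00, mul_zero] at h
        have h2 : (fun x : ℝ => CA * (2 ^ m * CT ^ m) * x ^ (m/2 : ℝ))
            = fun x : ℝ => CA * (2 ^ m * (CT ^ m * x ^ (m/2 : ℝ))) := by
          funext x; ring
        rw [h2] at h
        exact h
      exact (hct2.comp hnormt).eventually_lt_const (by positivity)
    have hev1 := Asymptotics.isLittleO_iff.1 he₁ (show (0:ℝ) < ε / 3 by positivity)
    filter_upwards [hev1, hev2, hev3, hCAb] with z h1 h2 h3 hca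
    -- coordinate bound
    have hcoord : |z (li hn) - y (li hn)| ≤ ‖z - y‖ := by
      have h := coord_abs_le_norm (z - y) (li hn)
      rw [PiLp.sub_apply] at h
      exact h
    have hAbound : |AF z - AF y| ≤ CA * ‖z - y‖ := by
      rwa [Real.norm_eq_abs] at hca
    -- argmax bound
    have hTbound : |T z - T y| ≤ CT * ‖z - y‖ ^ (1/2 : ℝ) := by
      have hq := hquant z
      have hb : (T z - T y) ^ 2 ≤ 8 * (1 + CA) / κ * ‖z - y‖ := by
        rw [div_mul_eq_mul_div, le_div_iff₀ hκ0]
        nlinarith [hcoord, hAbound, hq, norm_nonneg (z - y)]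
      calc |T z - T y| = Real.sqrt ((T z - T y) ^ 2) := (Real.sqrt_sq_eq_abs _).symm
        _ ≤ Real.sqrt (8 * (1 + CA) / κ * ‖z - y‖) := Real.sqrt_le_sqrt hb
        _ = CT * ‖z - y‖ ^ (1/2 : ℝ) := by
            rw [Real.sqrt_mul (by positivity) _, hCT, Real.sqrt_eq_rpow ‖z - y‖]
    -- ff bound
    have hffb : |ff n α (T z) - ff n α (T y)| ≤ 2 ^ m * (CT ^ m * ‖z - y‖ ^ (m/2 : ℝ)) := by
      calc |ff n α (T z) - ff n α (T y)| ≤ 2 ^ m * |T z - T y| ^ m :=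
            ff_holder hn hα0 hα1 (hTmem z) (hTmem y)
        _ ≤ 2 ^ m * (CT ^ m * ‖z - y‖ ^ (m/2 : ℝ)) := by
            apply mul_le_mul_of_nonneg_left _ (by positivity)
            calc |T z - T y| ^ m ≤ (CT * ‖z - y‖ ^ (1/2 : ℝ)) ^ m :=
                  Real.rpow_le_rpow (abs_nonneg _) hTbound hm0.le
              _ = CT ^ m * ‖z - y‖ ^ (m/2 : ℝ) := by
                  rw [Real.mul_rpow hCT0 (Real.rpow_nonneg (norm_nonneg _) _),
                    ← Real.rpow_mul (norm_nonneg _)]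
                  ring_nf
    -- the sandwich
    have hupper : vPog n hn α z - vPog n hn α y - (fderiv ℝ G y) (z - y)
        ≤ (G z - G y - (fderiv ℝ G y) (z - y))
          + (T z - T y) * (z (li hn) - y (li hn))
          + (AF z - AF y) * (ff n α (T z) - ff n α (T y)) := by
      have hu1 : vPog n hn α z ≤ Phi n α hn z (T z) := hvle z
      have hu2 : Phi n α hn y (T z) ≤ vPog n hn α y := hvge y (T z) (hTmem z)
      have hiden : Phi n α hn z (T z) - Phi n α hn y (T z)
          = (G z - G y) + (T z - T y) * (z (li hn) - y (li hn))
            + (AF z - AF y) * (ff n α (T z) - ff n α (T y)) := by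
        rw [hG]
        unfold Phi
        rw [hAF]
        ring
      linarith
    have hlower : (G z - G y - (fderiv ℝ G y) (z - y))
        ≤ vPog n hn α z - vPog n hn α y - (fderiv ℝ G y) (z - y) := by
      have hl1 : G z ≤ vPog n hn α z := hvge z (T y) (hTmem y)
      have hl2 : G y = vPog n hn α y := hvy.symm
      linarith
    -- assemble
    have habs1 : |(T z - T y) * (z (li hn) - y (li hn))|
        ≤ (CT * ‖z - y‖ ^ (1/2 : ℝ)) * ‖z - y‖ := by
      rw [abs_mul]
      apply mul_le_mul hTbound hcoord (abs_nonneg _) (by positivity)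
    have habs2 : |(AF z - AF y) * (ff n α (T z) - ff n α (T y))|
        ≤ (CA * ‖z - y‖) * (2 ^ m * (CT ^ m * ‖z - y‖ ^ (m/2 : ℝ))) := by
      rw [abs_mul]
      apply mul_le_mul hAbound hffb (abs_nonneg _) (by positivity)
    rw [Real.norm_eq_abs]
    rw [abs_le]
    have h1' : |G z - G y - (fderiv ℝ G y) (z - y)| ≤ ε / 3 * ‖z - y‖ := by
      rwa [Real.norm_eq_abs] at h1
    have habs1' := abs_le.1 habs1
    have habs2' := abs_le.1 habs2
    constructor
    · have := abs_le.1 h1'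
      nlinarith [norm_nonneg (z - y), this.1, habs1'.1, habs2'.1, hlower]
    · have := abs_le.1 h1'
      have hb2 : (CT * ‖z - y‖ ^ (1/2 : ℝ)) * ‖z - y‖ ≤ (ε / 3) * ‖z - y‖ :=
        mul_le_mul_of_nonneg_right h2.le (norm_nonneg _)
      have hb3 : (CA * ‖z - y‖) * (2 ^ m * (CT ^ m * ‖z - y‖ ^ (m/2 : ℝ)))
          ≤ (ε / 3) * ‖z - y‖ := by
        have hr : (CA * ‖z - y‖) * (2 ^ m * (CT ^ m * ‖z - y‖ ^ (m/2 : ℝ)))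
            = (CA * (2 ^ m * (CT ^ m * ‖z - y‖ ^ (m/2 : ℝ)))) * ‖z - y‖ := by ring
        rw [hr]
        exact mul_le_mul_of_nonneg_right h3.le (norm_nonneg _)
      nlinarith [this.2, habs1'.2, habs2'.2, hupper, hb2, hb3]
  exact hfd.differentiableAt

lemma pn_zero_struct (hn : 3 ≤ n) {y : EuclideanSpace ℝ (Fin n)} (h : Pj n y = 0) :
    y = y (li hn) • EuclideanSpace.single (li hn) (1:ℝ) := by
  ext i
  by_cases hi : (i : ℕ) = n - 1
  · have hil : i = li hn := (eq_li_iff hn i).1 hi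
    subst hil
    simp [PiLp.smul_apply, EuclideanSpace.single_apply]
  · have hcon := congrArg (fun v : EuclideanSpace ℝ (Fin n) => v i) h
    simp only [Pj_apply, if_neg hi, PiLp.zero_apply] at hcon
    have hne : i ≠ li hn := fun hc => hi (by rw [hc]; exact li_val hn)
    simp [PiLp.smul_apply, EuclideanSpace.single_apply, hne, hcon]

end PogAux


/-- **Final Remark of the paper: the Legendre transform of the Appendix counterexample.**
For `n ≥ 3`, `γ = 2 − 2/n`, `0 < α < γ − 1` and `u(x', x_n) = |x'|^γ (1 − x_n²)^{−α}` on
`X = ℝ^{n−1} × (−1, 1)`, the Legendre transform `v(y) = sup_{x ∈ X}(⟨x, y⟩ − u(x))`: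
(a) is finite everywhere and convex on `ℝⁿ`; (b) is differentiable at every `y ≠ 0`;
(c) has `∂v(0) = {0} × [−1, 1]`; (d) satisfies `∇v(0, ±s) = (0, ±1)` for every `s > 0`. -/
theorem pogorelov_legendre_transform
    (n : ℕ) (hn : 3 ≤ n) (α : ℝ) (hα0 : 0 < α) (hα1 : α < (2 - 2 / (n : ℝ)) - 1) :
    ((∀ y : EuclideanSpace ℝ (Fin n),
        BddAbove ((fun x => ⟪x, y⟫_ℝ - uPog n hn α x) '' XPog n hn)) ∧
      ConvexOn ℝ Set.univ (vPog n hn α)) ∧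
    (∀ y : EuclideanSpace ℝ (Fin n), y ≠ 0 → DifferentiableAt ℝ (vPog n hn α) y) ∧
    subdifferential (vPog n hn α) 0
      = {q : EuclideanSpace ℝ (Fin n) |
          (∀ i : Fin n, (i : ℕ) ≠ n - 1 → q i = 0) ∧
          lastCoord n hn q ∈ Set.Icc (-1 : ℝ) 1} ∧
    (∀ s : ℝ, 0 < s →
      HasGradientAt (vPog n hn α)
        (EuclideanSpace.single (⟨n - 1, by omega⟩ : Fin n) (1 : ℝ))
        (s • EuclideanSpace.single (⟨n - 1, by omega⟩ : Fin n) (1 : ℝ)) ∧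
      HasGradientAt (vPog n hn α)
        (-EuclideanSpace.single (⟨n - 1, by omega⟩ : Fin n) (1 : ℝ))
        (-(s • EuclideanSpace.single (⟨n - 1, by omega⟩ : Fin n) (1 : ℝ)))) := by
  refine ⟨⟨fun y => PogAux.bddA hn hα0 y, PogAux.v_convex hn hα0⟩, ?_,
    PogAux.subdiff_eq hn hα0, ?_⟩
  · intro y hy
    by_cases hP : PogAux.Pj n y = 0
    · have hyeq := PogAux.pn_zero_struct hn hP
      have hyl : y (PogAux.li hn) ≠ 0 := by
        intro h0
        apply hy
        rw [hyeq, h0, zero_smul]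
      set σ : ℝ := if 0 < y (PogAux.li hn) then 1 else -1 with hσdef
      have hσ : σ = 1 ∨ σ = -1 := by
        rcases lt_or_ge 0 (y (PogAux.li hn)) with h | h
        · exact Or.inl (if_pos h)
        · exact Or.inr (if_neg (not_lt.2 h))
      have hb : 0 < σ * y (PogAux.li hn) := by
        rcases lt_or_ge 0 (y (PogAux.li hn)) with h | h
        · rw [hσdef, if_pos h, one_mul]; exact h
        · have h' : y (PogAux.li hn) < 0 := lt_of_le_of_ne h (by exact hyl)
          rw [hσdef, if_neg (not_lt.2 h), neg_one_mul]
          linarith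
      have hgrad := PogAux.gradAxis hn hα0 hα1 hσ hb
      rw [hyeq]
      exact hgrad.differentiableAt
    · exact PogAux.diff_interior hn hα0 hα1 hP
  · intro s hs
    constructor
    · have h := PogAux.gradAxis hn hα0 hα1 (σ := 1) (b := s) (Or.inl rfl)
        (by rwa [one_mul])
      rw [one_smul] at h
      exact h
    · have h := PogAux.gradAxis hn hα0 hα1 (σ := -1) (b := -s) (Or.inr rfl)
        (by rw [neg_one_mul, neg_neg]; exact hs)
      rw [neg_smul, one_smul, neg_smul] at h
      have h2 : -s • EuclideanSpace.single (PogAux.li hn) (1:ℝ)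
          = -(s • EuclideanSpace.single (PogAux.li hn) (1:ℝ)) := by rw [neg_smul]
      exact h
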